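/- Let v ∈ W^{1,2}(ℝ²). Then (∫_{ℝ²} v² dx)^{1/2} ≤ C (1 + ∫_{ℝ²} |∇v|² dx + ∫_{ℝ²} v²/(1+|v|)² dx) for some absolute constant C > 0. -/

import Mathlib

open MeasureTheory

noncomputable def Gfun (t : ℝ) : ℝ := t^2 / Real.sqrt (1 + t^2)

noncomputable def Gfun' (t : ℝ) : ℝ :=
  (2*t * Real.sqrt (1 + t^2) - t^2 * (t / Real.sqrt (1 + t^2))) / (Real.sqrt (1 + t^2))^2

lemma one_add_sq_pos (t : ℝ) : (0:ℝ) < 1 + t^2 := by positivity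

lemma sqrt_one_add_sq_pos (t : ℝ) : 0 < Real.sqrt (1 + t^2) :=
  Real.sqrt_pos.2 (one_add_sq_pos t)

lemma sq_sqrt_one_add_sq (t : ℝ) : (Real.sqrt (1 + t^2))^2 = 1 + t^2 :=
  Real.sq_sqrt (one_add_sq_pos t).le

lemma one_le_sqrt_one_add_sq (t : ℝ) : 1 ≤ Real.sqrt (1 + t^2) := by
  have h := Real.sqrt_le_sqrt (show (1:ℝ) ≤ 1 + t^2 by nlinarith [sq_nonneg t])
  simpa using h

lemma hasDerivAt_Gfun (t : ℝ) : HasDerivAt Gfun (Gfun' t) t := by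
  have h1 : HasDerivAt (fun t : ℝ => 1 + t^2) (2*t) t := by
    simpa using ((hasDerivAt_pow 2 t).const_add 1)
  have hs : HasDerivAt (fun t : ℝ => Real.sqrt (1 + t^2)) (t / Real.sqrt (1 + t^2)) t := by
    have := (Real.hasDerivAt_sqrt (one_add_sq_pos t).ne').comp t h1
    convert this using 1
    · rfl
    · rfl
    · rfl
    · ring
  have hnum : HasDerivAt (fun t : ℝ => t^2) (2*t) t := by simpa using hasDerivAt_pow 2 t
  exact hnum.div hs (sqrt_one_add_sq_pos t).ne'

lemma abs_Gfun'_le (t : ℝ) : |Gfun' t| ≤ 2 * (|t| / Real.sqrt (1 + t^2)) := by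
  set s := Real.sqrt (1 + t^2) with hs_def
  have hs : 0 < s := sqrt_one_add_sq_pos t
  have hs2 : s^2 = 1 + t^2 := sq_sqrt_one_add_sq t
  have heq : Gfun' t = t * (2 + t^2) / s^3 := by
    rw [Gfun']
    rw [← hs_def]
    field_simp
    linear_combination (2*t) * hs2
  rw [heq, abs_div, abs_of_pos (by positivity : (0:ℝ) < s^3), abs_mul,
    abs_of_pos (by positivity : (0:ℝ) < 2 + t^2)]
  rw [← mul_div_assoc, div_le_div_iff₀ (by positivity) hs]
  calc |t| * (2 + t^2) * s ≤ |t| * (2*(1+t^2)) * s := by nlinarith [mul_nonneg (mul_nonneg (abs_nonneg t) hs.le) (sq_nonneg t)]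
    _ = 2 * |t| * (s^2 * s) := by rw [hs2]; ring
    _ = 2 * |t| * s^3 := by ring

lemma Gfun_sq_le (t : ℝ) : (Gfun t)^2 ≤ t^2 := by
  rw [Gfun, div_pow, sq_sqrt_one_add_sq]
  rw [div_le_iff₀ (one_add_sq_pos t)]
  nlinarith [sq_nonneg t, sq_nonneg (t^2)]

lemma abs_Gfun_le (t : ℝ) : |Gfun t| ≤ t^2 := by
  rw [Gfun, abs_div, abs_of_nonneg (sq_nonneg t),
    abs_of_pos (sqrt_one_add_sq_pos t)]
  exact div_le_self (sq_nonneg t) (one_le_sqrt_one_add_sq t)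

lemma sq_le_Gfun (t : ℝ) : t^2 ≤ 4*(Gfun t)^2 + 4*(t^2/(1+|t|)^2) := by
  have habs : (0:ℝ) < (1+|t|)^2 := by positivity
  have hG2 : (Gfun t)^2 = t^4 / (1+t^2) := by
    rw [Gfun, div_pow, sq_sqrt_one_add_sq]; ring_nf
  rcases le_or_gt (|t|) 1 with h | h
  · have h1 : t^2 ≤ 4*(t^2/(1+|t|)^2) := by
      rw [mul_div_assoc', le_div_iff₀ habs]
      have ht1 : t^2 ≤ 1 := by nlinarith [sq_abs t, abs_nonneg t]
      nlinarith [sq_abs t, sq_nonneg t, mul_le_mul_of_nonneg_left h (sq_nonneg t),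
        mul_nonneg (sq_nonneg t) (abs_nonneg t)]
    nlinarith [sq_nonneg (Gfun t)]
  · have h1 : t^2 ≤ 4*(Gfun t)^2 := by
      rw [hG2, mul_div_assoc', le_div_iff₀ (one_add_sq_pos t)]
      have ht2 : 1 ≤ t^2 := by nlinarith [sq_abs t]
      nlinarith [sq_nonneg t]
    have h2 : 0 ≤ t^2/(1+|t|)^2 := by positivity
    nlinarith

lemma sigma_sq_le (t : ℝ) : (|t| / Real.sqrt (1+t^2))^2 ≤ 2 * (t^2/(1+|t|)^2) := by
  have habs : (0:ℝ) < (1+|t|)^2 := by positivity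
  rw [div_pow, sq_sqrt_one_add_sq, sq_abs, mul_div_assoc',
    div_le_div_iff₀ (one_add_sq_pos t) habs]
  nlinarith [sq_abs t, abs_nonneg t, sq_nonneg (1 - |t|), sq_nonneg t,
    mul_nonneg (sq_nonneg t) (sq_nonneg (1 - |t|))]


/-- If an everywhere differentiable function and its derivative are both integrable on ℝ,
then the sup norm is bounded by the L¹ norm of the derivative. -/
lemma oneD {f f' : ℝ → ℝ} (hd : ∀ x, HasDerivAt f (f' x) x)
    (hf : Integrable f) (hf' : Integrable f') (x : ℝ) :
    |f x| ≤ ∫ t, |f' t| := by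
  have habs : Integrable (fun t => |f' t|) := hf'.abs
  have key : ∀ ε > 0, |f x| ≤ (∫ t, |f' t|) + ε := by
    intro ε hε
    obtain ⟨x₀, hx₀lt, hx₀⟩ : ∃ x₀ < x, |f x₀| < ε := by
      by_contra h
      push_neg at h
      have hsub : IntegrableOn (fun _ : ℝ => ε) (Set.Iio x) volume := by
        refine Integrable.mono (hf.abs.integrableOn) aestronglyMeasurable_const ?_
        refine (ae_restrict_iff' measurableSet_Iio).2 (Filter.Eventually.of_forall fun t ht => ?_)
        simpa [abs_of_pos hε, abs_abs] using h t ht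
      rw [integrableOn_const_iff] at hsub
      rcases hsub with h1 | h2
      · simp [hε.ne'] at h1
      · simp [Real.volume_Iio] at h2
    have hFTC : ∫ t in x₀..x, f' t = f x - f x₀ :=
      intervalIntegral.integral_eq_sub_of_hasDerivAt (fun t _ => hd t)
        hf'.intervalIntegrable
    have h1 : |f x| ≤ |f x₀| + |∫ t in x₀..x, f' t| := by
      have hfx : f x = f x₀ + ∫ t in x₀..x, f' t := by rw [hFTC]; ring
      rw [hfx]; exact abs_add_le _ _
    have h2 : |∫ t in x₀..x, f' t| ≤ ∫ t in x₀..x, |f' t| :=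
      intervalIntegral.abs_integral_le_integral_abs hx₀lt.le
    have h3 : (∫ t in x₀..x, |f' t|) ≤ ∫ t, |f' t| := by
      rw [intervalIntegral.integral_of_le hx₀lt.le]
      exact setIntegral_le_integral habs (Filter.Eventually.of_forall fun t => abs_nonneg _)
    linarith
  by_contra h
  push_neg at h
  obtain ⟨ε, hε, hlt⟩ : ∃ ε > 0, (∫ t, |f' t|) + ε < |f x| :=
    ⟨(|f x| - ∫ t, |f' t|)/2, by linarith, by linarith⟩
  exact absurd (key ε hε) (by linarith)

/-- Sobolev-type inequality on the plane with p = 1 (Ladyzhenskaya-type building block). -/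
lemma lady {W F₁ F₂ : ℝ × ℝ → ℝ}
    (hW : Integrable W ((volume : Measure ℝ).prod volume))
    (hF₁ : Integrable F₁ ((volume : Measure ℝ).prod volume))
    (hF₂ : Integrable F₂ ((volume : Measure ℝ).prod volume))
    (h1 : ∀ y x, HasDerivAt (fun t => W (t, y)) (F₁ (x, y)) x)
    (h2 : ∀ x y, HasDerivAt (fun t => W (x, t)) (F₂ (x, y)) y) :
    ∫ p, (W p)^2 ∂((volume : Measure ℝ).prod volume) ≤
      (∫ p, |F₁ p| ∂((volume : Measure ℝ).prod volume)) *
      (∫ p, |F₂ p| ∂((volume : Measure ℝ).prod volume)) := by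
  set μ : Measure ℝ := volume
  set g : ℝ → ℝ := fun y => ∫ x, |F₁ (x, y)| ∂μ with hg_def
  set h : ℝ → ℝ := fun x => ∫ y, |F₂ (x, y)| ∂μ with hh_def
  have hg_nonneg : ∀ y, 0 ≤ g y := fun y => integral_nonneg fun x => abs_nonneg _
  have hh_nonneg : ∀ x, 0 ≤ h x := fun x => integral_nonneg fun y => abs_nonneg _
  have hg_int : Integrable g μ := hF₁.abs.integral_prod_right
  have hh_int : Integrable h μ := hF₂.abs.integral_prod_left
  -- claim 1 : for a.e. y, ∀ x, |W (x,y)| ≤ g y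
  have claim1 : ∀ᵐ y ∂μ, ∀ x, |W (x, y)| ≤ g y := by
    filter_upwards [hW.prod_left_ae, hF₁.prod_left_ae] with y hWy hFy
    intro x
    exact oneD (h1 y) hWy hFy x
  have claim2 : ∀ᵐ x ∂μ, ∀ y, |W (x, y)| ≤ h x := by
    filter_upwards [hW.prod_right_ae, hF₂.prod_right_ae] with x hWx hFx
    intro y
    exact oneD (h2 x) hWx hFx y
  -- promote to the product space
  have key1 : ∀ᵐ p ∂(μ.prod μ), |W p| ≤ g p.2 := by
    rw [ae_iff] at claim1 ⊢
    obtain ⟨T, hsub, hTm, hT0⟩ := exists_measurable_superset_of_null claim1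
    refine measure_mono_null (t := (Set.univ : Set ℝ) ×ˢ T) (fun p hp => ?_) ?_
    · exact ⟨trivial, hsub (fun hall => hp (hall p.1))⟩
    · rw [Measure.prod_prod, hT0, mul_zero]
  have key2 : ∀ᵐ p ∂(μ.prod μ), |W p| ≤ h p.1 := by
    rw [ae_iff] at claim2 ⊢
    obtain ⟨T, hsub, hTm, hT0⟩ := exists_measurable_superset_of_null claim2
    refine measure_mono_null (t := T ×ˢ (Set.univ : Set ℝ)) (fun p hp => ?_) ?_
    · exact ⟨hsub (fun hall => hp (hall p.2)), trivial⟩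
    · rw [Measure.prod_prod, hT0, zero_mul]
  have hae : ∀ᵐ p ∂(μ.prod μ), (W p)^2 ≤ h p.1 * g p.2 := by
    filter_upwards [key1, key2] with p hp1 hp2
    calc (W p)^2 = |W p| * |W p| := by rw [← sq_abs, sq]
      _ ≤ h p.1 * g p.2 := mul_le_mul hp2 hp1 (abs_nonneg _) (hh_nonneg _)
  calc ∫ p, (W p)^2 ∂(μ.prod μ) ≤ ∫ p, h p.1 * g p.2 ∂(μ.prod μ) :=
        integral_mono_of_nonneg (Filter.Eventually.of_forall fun p => sq_nonneg _)
          (hh_int.mul_prod hg_int) hae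
    _ = (∫ x, h x ∂μ) * (∫ y, g y ∂μ) := integral_prod_mul h g
    _ = (∫ p, |F₂ p| ∂(μ.prod μ)) * (∫ p, |F₁ p| ∂(μ.prod μ)) := by
        have hh_eq : (∫ x, h x ∂μ) = ∫ p, |F₂ p| ∂(μ.prod μ) :=
          integral_integral (f := fun x y => |F₂ (x, y)|) hF₂.abs
        have hg_eq : (∫ y, g y ∂μ) = ∫ p, |F₁ p| ∂(μ.prod μ) := by
          rw [← integral_prod_swap (fun p => |F₁ p|)]
          exact integral_integral (f := fun y x => |F₁ (x, y)|) hF₁.abs.swap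
        rw [hh_eq, hg_eq]
    _ = _ := mul_comm _ _

set_option maxHeartbeats 1000000 in
theorem stmt7 :
    ∃ C : ℝ, 0 < C ∧ ∀ v : EuclideanSpace ℝ (Fin 2) → ℝ,
      MemLp v 2 volume → Differentiable ℝ v →
      MemLp (fun x => ‖fderiv ℝ v x‖) 2 volume →
      Real.sqrt (∫ x, (v x) ^ 2) ≤
        C * (1 + (∫ x, ‖fderiv ℝ v x‖ ^ 2) +
          ∫ x, (v x) ^ 2 / (1 + |v x|) ^ 2) := by
  refine ⟨4, by norm_num, fun v hv hd hD => ?_⟩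
  set A := ∫ x, ‖fderiv ℝ v x‖ ^ 2 with hA_def
  set B := ∫ x, (v x) ^ 2 / (1 + |v x|) ^ 2 with hB_def
  set S := ∫ x, (v x) ^ 2 with hS_def
  have hvc : Continuous v := hd.continuous
  have iv2 : Integrable (fun x => (v x)^2) := hv.integrable_sq
  have iD2 : Integrable (fun x => ‖fderiv ℝ v x‖^2) := hD.integrable_sq
  have hrc : Continuous (fun x => (v x)^2/(1+|v x|)^2) := by
    apply Continuous.div (by fun_prop) (by fun_prop)
    intro x
    positivity
  have iB : Integrable (fun x => (v x)^2/(1+|v x|)^2) := by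
    refine iv2.mono' hrc.aestronglyMeasurable (Filter.Eventually.of_forall fun x => ?_)
    rw [Real.norm_eq_abs, abs_of_nonneg (by positivity)]
    apply div_le_self (sq_nonneg _)
    nlinarith [abs_nonneg (v x)]
  have hB0 : 0 ≤ B := integral_nonneg fun x => by positivity
  have hA0 : 0 ≤ A := integral_nonneg fun x => sq_nonneg _
  -- the auxiliary functions
  set w : EuclideanSpace ℝ (Fin 2) → ℝ := fun x => Gfun (v x) with hw_def
  have hGd : Differentiable ℝ Gfun := fun t => (hasDerivAt_Gfun t).differentiableAt
  have hwc : Continuous w := hGd.continuous.comp hvc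
  have hwd : Differentiable ℝ w := hGd.comp hd
  have iw : Integrable w := by
    refine iv2.mono' hwc.aestronglyMeasurable (Filter.Eventually.of_forall fun x => ?_)
    rw [Real.norm_eq_abs]; exact abs_Gfun_le (v x)
  have iw2 : Integrable (fun x => (w x)^2) := by
    refine iv2.mono' ((hwc.pow 2).aestronglyMeasurable) (Filter.Eventually.of_forall fun x => ?_)
    rw [Real.norm_eq_abs, abs_of_nonneg (sq_nonneg _)]; exact Gfun_sq_le (v x)
  set σv : EuclideanSpace ℝ (Fin 2) → ℝ := fun x => |v x| / Real.sqrt (1 + (v x)^2)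
    with hσ_def
  have hσc : Continuous σv := by
    apply Continuous.div (by fun_prop) (by fun_prop)
    exact fun x => (sqrt_one_add_sq_pos (v x)).ne'
  have hσ0 : ∀ x, 0 ≤ σv x := fun x => div_nonneg (abs_nonneg _) (Real.sqrt_nonneg _)
  have iσ2 : Integrable (fun x => (σv x)^2) := by
    refine (iB.const_mul 2).mono' ((hσc.pow 2).aestronglyMeasurable) (Filter.Eventually.of_forall fun x => ?_)
    rw [Real.norm_eq_abs, abs_of_nonneg (sq_nonneg _)]
    exact sigma_sq_le (v x)
  set Φ : EuclideanSpace ℝ (Fin 2) → ℝ := fun x => σv x * ‖fderiv ℝ v x‖ with hΦ_def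
  have hDm : AEStronglyMeasurable (fun x => ‖fderiv ℝ v x‖) volume := hD.aestronglyMeasurable
  have iΦ : Integrable Φ := by
    refine ((iσ2.add iD2).const_mul (1/2)).mono'
      (hσc.aestronglyMeasurable.mul hDm) (Filter.Eventually.of_forall fun x => ?_)
    rw [Real.norm_eq_abs, abs_of_nonneg (mul_nonneg (hσ0 x) (norm_nonneg _))]
    simp only [Pi.add_apply]
    nlinarith [sq_nonneg (σv x - ‖fderiv ℝ v x‖)]
  -- Cauchy-Schwarz
  have hσmem : MemLp σv 2 volume := (memLp_two_iff_integrable_sq hσc.aestronglyMeasurable).2 iσ2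
  have hCS : (∫ x, Φ x) ≤ Real.sqrt (2*B) * Real.sqrt A := by
    have hc : (2:ℝ).HolderConjugate 2 := ⟨by norm_num, by norm_num, by norm_num⟩
    have h2 : ENNReal.ofReal (2:ℝ) = 2 := by norm_num
    have h := integral_mul_le_Lp_mul_Lq_of_nonneg hc
      (Filter.Eventually.of_forall hσ0)
      (Filter.Eventually.of_forall fun x => norm_nonneg (fderiv ℝ v x))
      (by rw [h2]; exact hσmem) (by rw [h2]; exact hD)
    simp_rw [show ∀ a : ℝ, a ^ (2:ℝ) = a^2 from fun a => by
      rw [show (2:ℝ) = ((2:ℕ):ℝ) by norm_num, Real.rpow_natCast]] at h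
    rw [show (1:ℝ)/2 = 1/2 from rfl, ← Real.sqrt_eq_rpow, ← Real.sqrt_eq_rpow] at h
    have hσ2B : (∫ x, (σv x)^2) ≤ 2*B := by
      have hmono := integral_mono_of_nonneg (Filter.Eventually.of_forall fun x => sq_nonneg (σv x))
        (iB.const_mul 2) (Filter.Eventually.of_forall fun x => sigma_sq_le (v x))
      rwa [integral_const_mul, ← hB_def] at hmono
    calc (∫ x, Φ x) ≤ Real.sqrt (∫ x, (σv x)^2) * Real.sqrt (∫ x, ‖fderiv ℝ v x‖^2) := h
      _ ≤ Real.sqrt (2*B) * Real.sqrt A := by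
          apply mul_le_mul_of_nonneg_right (Real.sqrt_le_sqrt hσ2B) (Real.sqrt_nonneg _)
  have hΦ0 : 0 ≤ ∫ x, Φ x := integral_nonneg fun x => mul_nonneg (hσ0 x) (norm_nonneg _)
  -- transfer to ℝ × ℝ
  set φe : (ℝ × ℝ) ≃ᵐ EuclideanSpace ℝ (Fin 2) :=
    ((MeasurableEquiv.finTwoArrow : (Fin 2 → ℝ) ≃ᵐ ℝ × ℝ).symm).trans
      (MeasurableEquiv.toLp 2 (Fin 2 → ℝ)) with hφe_def
  have hφ : MeasurePreserving φe volume volume := by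
    have h1 : MeasurePreserving
        (MeasurableEquiv.finTwoArrow : (Fin 2 → ℝ) ≃ᵐ ℝ × ℝ).symm volume volume :=
      (volume_preserving_finTwoArrow ℝ).symm _
    have h2 : MeasurePreserving (MeasurableEquiv.toLp 2 (Fin 2 → ℝ)) volume volume :=
      (EuclideanSpace.volume_preserving_symm_measurableEquiv_toLp (Fin 2)).symm _
    exact h2.comp h1
  set b₀ : EuclideanSpace ℝ (Fin 2) := EuclideanSpace.single (0 : Fin 2) (1:ℝ) with hb₀_def
  set b₁ : EuclideanSpace ℝ (Fin 2) := EuclideanSpace.single (1 : Fin 2) (1:ℝ) with hb₁_def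
  have hφpt : ∀ p : ℝ × ℝ,
      φe p = EuclideanSpace.single (0 : Fin 2) p.1 + EuclideanSpace.single (1 : Fin 2) p.2 := by
    intro p
    ext i
    fin_cases i <;>
      simp [hφe_def, MeasurableEquiv.coe_toLp, EuclideanSpace.single_apply,
        MeasurableEquiv.finTwoArrow, MeasurableEquiv.piFinTwo, piFinTwoEquiv]
  -- the chain rule for w
  have hwfd : ∀ q, HasFDerivAt w (Gfun' (v q) • fderiv ℝ v q) q := fun q =>
    (hasDerivAt_Gfun (v q)).comp_hasFDerivAt q (hd q).hasFDerivAt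
  have hfw : ∀ q, fderiv ℝ w q = Gfun' (v q) • fderiv ℝ v q := fun q => (hwfd q).fderiv
  have hwnorm : ∀ q, ‖fderiv ℝ w q‖ ≤ 2 * Φ q := by
    intro q
    rw [hfw q, norm_smul, Real.norm_eq_abs]
    calc |Gfun' (v q)| * ‖fderiv ℝ v q‖ ≤ (2 * σv q) * ‖fderiv ℝ v q‖ :=
          mul_le_mul_of_nonneg_right (abs_Gfun'_le (v q)) (norm_nonneg _)
      _ = 2 * Φ q := by rw [hΦ_def]; ring
  -- the functions on ℝ × ℝ
  set W : ℝ × ℝ → ℝ := fun p => w (φe p) with hW_def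
  set F₁ : ℝ × ℝ → ℝ := fun p => fderiv ℝ w (φe p) b₀ with hF₁_def
  set F₂ : ℝ × ℝ → ℝ := fun p => fderiv ℝ w (φe p) b₁ with hF₂_def
  have h1 : ∀ y x, HasDerivAt (fun t => W (t, y)) (F₁ (x, y)) x := by
    intro y x
    have hfun : (fun t => W (t, y)) = fun t =>
        w (EuclideanSpace.single (0 : Fin 2) t + EuclideanSpace.single (1 : Fin 2) y) := by
      funext t
      show w (φe (t, y)) = _
      rw [hφpt (t, y)]
    have hsm : ∀ t : ℝ, EuclideanSpace.single (0 : Fin 2) (t : ℝ) = t • b₀ := by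
      intro t
      rw [hb₀_def]
      ext i
      simp [EuclideanSpace.single_apply]
    have hline : HasDerivAt (fun t : ℝ =>
        EuclideanSpace.single (0 : Fin 2) t + EuclideanSpace.single (1 : Fin 2) y) b₀ x := by
      simp_rw [hsm]
      simpa using ((hasDerivAt_id x).smul_const b₀).add_const
        (EuclideanSpace.single (1 : Fin 2) y)
    have hcomp := ((hwd _).hasFDerivAt).comp_hasDerivAt x hline
    have hval : F₁ (x, y) = fderiv ℝ w
        (EuclideanSpace.single (0 : Fin 2) x + EuclideanSpace.single (1 : Fin 2) y) b₀ := by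
      show fderiv ℝ w (φe (x, y)) b₀ = _
      rw [hφpt (x, y)]
    rw [hfun, hval]
    exact hcomp
  have h2 : ∀ x y, HasDerivAt (fun t => W (x, t)) (F₂ (x, y)) y := by
    intro x y
    have hfun : (fun t => W (x, t)) = fun t =>
        w (EuclideanSpace.single (0 : Fin 2) x + EuclideanSpace.single (1 : Fin 2) t) := by
      funext t
      show w (φe (x, t)) = _
      rw [hφpt (x, t)]
    have hsm : ∀ t : ℝ, EuclideanSpace.single (1 : Fin 2) (t : ℝ) = t • b₁ := by
      intro t
      rw [hb₁_def]
      ext i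
      simp [EuclideanSpace.single_apply]
    have hline : HasDerivAt (fun t : ℝ =>
        EuclideanSpace.single (0 : Fin 2) x + EuclideanSpace.single (1 : Fin 2) t) b₁ y := by
      simp_rw [hsm]
      simpa using ((hasDerivAt_id y).smul_const b₁).const_add
        (EuclideanSpace.single (0 : Fin 2) x)
    have hcomp := ((hwd _).hasFDerivAt).comp_hasDerivAt y hline
    have hval : F₂ (x, y) = fderiv ℝ w
        (EuclideanSpace.single (0 : Fin 2) x + EuclideanSpace.single (1 : Fin 2) y) b₁ := by
      show fderiv ℝ w (φe (x, y)) b₁ = _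
      rw [hφpt (x, y)]
    rw [hfun, hval]
    exact hcomp
  -- integrability on the product space
  have hprod : (volume : Measure (ℝ × ℝ)) = (volume : Measure ℝ).prod volume :=
    Measure.volume_eq_prod ℝ ℝ
  have hWint : Integrable W volume := (hφ.integrable_comp_emb φe.measurableEmbedding).2 iw
  have hΦe : Integrable (fun p => Φ (φe p)) volume :=
    (hφ.integrable_comp_emb φe.measurableEmbedding).2 iΦ
  have hF₁m : AEStronglyMeasurable F₁ volume :=
    ((measurable_fderiv_apply_const ℝ w b₀).comp φe.measurable).aestronglyMeasurable
  have hF₂m : AEStronglyMeasurable F₂ volume :=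
    ((measurable_fderiv_apply_const ℝ w b₁).comp φe.measurable).aestronglyMeasurable
  have hnb₀ : ‖b₀‖ = 1 := by rw [hb₀_def, EuclideanSpace.norm_single]; norm_num
  have hnb₁ : ‖b₁‖ = 1 := by rw [hb₁_def, EuclideanSpace.norm_single]; norm_num
  have hF₁bound : ∀ p, |F₁ p| ≤ 2 * Φ (φe p) := by
    intro p
    calc |F₁ p| = ‖fderiv ℝ w (φe p) b₀‖ := (Real.norm_eq_abs _).symm
      _ ≤ ‖fderiv ℝ w (φe p)‖ * ‖b₀‖ := ContinuousLinearMap.le_opNorm _ _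
      _ = ‖fderiv ℝ w (φe p)‖ := by rw [hnb₀, mul_one]
      _ ≤ 2 * Φ (φe p) := hwnorm _
  have hF₂bound : ∀ p, |F₂ p| ≤ 2 * Φ (φe p) := by
    intro p
    calc |F₂ p| = ‖fderiv ℝ w (φe p) b₁‖ := (Real.norm_eq_abs _).symm
      _ ≤ ‖fderiv ℝ w (φe p)‖ * ‖b₁‖ := ContinuousLinearMap.le_opNorm _ _
      _ = ‖fderiv ℝ w (φe p)‖ := by rw [hnb₁, mul_one]
      _ ≤ 2 * Φ (φe p) := hwnorm _
  have hF₁int : Integrable F₁ volume :=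
    (hΦe.const_mul 2).mono' hF₁m (Filter.Eventually.of_forall fun p => by
      rw [Real.norm_eq_abs]; exact hF₁bound p)
  have hF₂int : Integrable F₂ volume :=
    (hΦe.const_mul 2).mono' hF₂m (Filter.Eventually.of_forall fun p => by
      rw [Real.norm_eq_abs]; exact hF₂bound p)
  have hIΦ : (∫ p, Φ (φe p)) = ∫ x, Φ x := hφ.integral_comp φe.measurableEmbedding Φ
  have hIF₁ : (∫ p, |F₁ p|) ≤ 2 * (Real.sqrt (2*B) * Real.sqrt A) := by
    calc (∫ p, |F₁ p|) ≤ ∫ p, 2 * Φ (φe p) :=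
          integral_mono hF₁int.abs (hΦe.const_mul 2) hF₁bound
      _ = 2 * ∫ p, Φ (φe p) := integral_const_mul 2 _
      _ = 2 * ∫ x, Φ x := by rw [hIΦ]
      _ ≤ 2 * (Real.sqrt (2*B) * Real.sqrt A) := by linarith [hCS]
  have hIF₂ : (∫ p, |F₂ p|) ≤ 2 * (Real.sqrt (2*B) * Real.sqrt A) := by
    calc (∫ p, |F₂ p|) ≤ ∫ p, 2 * Φ (φe p) :=
          integral_mono hF₂int.abs (hΦe.const_mul 2) hF₂bound
      _ = 2 * ∫ p, Φ (φe p) := integral_const_mul 2 _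
      _ = 2 * ∫ x, Φ x := by rw [hIΦ]
      _ ≤ 2 * (Real.sqrt (2*B) * Real.sqrt A) := by linarith [hCS]
  have hIF₂0 : 0 ≤ ∫ p, |F₂ p| := integral_nonneg fun p => abs_nonneg _
  -- apply the two-dimensional Sobolev-type inequality
  rw [hprod] at hWint hF₁int hF₂int hIF₁ hIF₂ hIF₂0
  have hlady := lady hWint hF₁int hF₂int h1 h2
  have hIw2 : (∫ p, (W p)^2 ∂((volume : Measure ℝ).prod volume)) = ∫ x, (w x)^2 := by
    rw [← hprod]
    exact hφ.integral_comp φe.measurableEmbedding (fun x => (w x)^2)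
  have hw2le : (∫ x, (w x)^2) ≤
      (2 * (Real.sqrt (2*B) * Real.sqrt A)) * (2 * (Real.sqrt (2*B) * Real.sqrt A)) := by
    rw [← hIw2]
    exact le_trans hlady (mul_le_mul hIF₁ hIF₂ hIF₂0 (by positivity))
  have hw2le' : (∫ x, (w x)^2) ≤ 8 * A * B := by
    have h2B : Real.sqrt (2*B) ^ 2 = 2*B := Real.sq_sqrt (by linarith)
    have hA' : Real.sqrt A ^ 2 = A := Real.sq_sqrt hA0
    nlinarith [hw2le, Real.sqrt_nonneg (2*B), Real.sqrt_nonneg A]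
  -- back to v
  have hSle : S ≤ 4*(∫ x, (w x)^2) + 4*B := by
    have hint : Integrable (fun x => 4*(w x)^2 + 4*((v x)^2/(1+|v x|)^2)) volume :=
      (iw2.const_mul 4).add (iB.const_mul 4)
    have h := integral_mono_of_nonneg
      (Filter.Eventually.of_forall fun x => sq_nonneg (v x)) hint
      (Filter.Eventually.of_forall fun x => sq_le_Gfun (v x))
    rw [integral_add (iw2.const_mul 4) (iB.const_mul 4), integral_const_mul,
      integral_const_mul, ← hB_def] at h
    exact h
  have hfinal : S ≤ (4*(1+A+B))^2 := by
    nlinarith [hSle, hw2le', hA0, hB0, sq_nonneg A, sq_nonneg B]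
  calc Real.sqrt S ≤ Real.sqrt ((4*(1+A+B))^2) := Real.sqrt_le_sqrt hfinal
    _ = 4*(1+A+B) := Real.sqrt_sq (by linarith)
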